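/- arXiv:2308.10676 — 3 statements merged into one kernel-verified Lean document; each statement's English description precedes it below -/
import Mathlib

section
/- Let (Σ,P) be a Kelvin–Planck theory with Clausius–Duhem pair (η⁰,T⁰), and let (v,w) ∈ V(Σ) satisfy ∫_Σ η⁰ dv − ∫_Σ (1/T⁰) dw = 0. If (v,w) is not a member of \hat{P}, then there exists another Clausius–Duhem pair (η,T) for (Σ,P) such that ∫_Σ η dv − ∫_Σ (1/T) dw < 0. -/
open Set

noncomputable section

/-- Signed regular Borel measures on `X`, modeled via the Riesz representation
theorem as the weak-star dual of `C(X, ℝ)`. -/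
abbrev Meas (X : Type*) [TopologicalSpace X] := WeakDual ℝ C(X, ℝ)

/-- The ambient space containing `V(X) = M°(X) ⊕ M(X)`; membership in the
subspace `M°(X)` of the first component is expressed by `p.1 1 = 0`. -/
abbrev VSp (X : Type*) [TopologicalSpace X] := Meas X × Meas X

/-- The cone of nonnegative measures. -/
def PosMeas (X : Type*) [TopologicalSpace X] : Set (Meas X) :=
  {μ | ∀ f : C(X, ℝ), (∀ x, 0 ≤ f x) → 0 ≤ μ f}

variable {X : Type*} [TopologicalSpace X]

/-- The Dirac measure at a point, i.e. the evaluation functional. -/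
def dirac (x : X) : Meas X :=
  (⟨⟨⟨fun f => f x, fun _ _ => rfl⟩, fun _ _ => rfl⟩,
    continuous_eval_const x⟩ : C(X, ℝ) →L[ℝ] ℝ)

/-- The set of nonnegative multiples of members of `P`. -/
def coneOf (P : Set (VSp X)) : Set (VSp X) :=
  {x | ∃ c : ℝ, 0 ≤ c ∧ ∃ p ∈ P, x = c • p}

/-- `\hat P`, the weak-star closure of the cone generated by `P`. -/
def hatP (P : Set (VSp X)) : Set (VSp X) :=
  closure (coneOf P)

/-- A thermodynamical theory: processes have change of condition with total mass
zero (i.e. `P ⊆ V(X)`), and `\hat P` is convex. -/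
def IsThermoTheory (P : Set (VSp X)) : Prop :=
  (∀ p ∈ P, p.1 (1 : C(X, ℝ)) = 0) ∧ Convex ℝ (hatP P)

/-- A Kelvin–Planck theory: a thermodynamical theory with
`\hat P ∩ ({0} × M₊(X)) = {(0,0)}`. -/
def IsKelvinPlanck (P : Set (VSp X)) : Prop :=
  IsThermoTheory P ∧ hatP P ∩ (({0} : Set (Meas X)) ×ˢ PosMeas X) = {(0, 0)}

/-- A Clausius–Duhem pair `(η, T)` for the theory `P`: `η` and `T` are continuous,
`T` is strictly positive, and for every continuous `β` equal pointwise to `1/T`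
(such a `β` exists, and is unique, by positivity of `T`), the Clausius–Duhem
inequality `∫ η d(Δm) ≥ ∫ (1/T) dq` holds for every process in `P`. -/
def IsCDPair (P : Set (VSp X)) (η T : C(X, ℝ)) : Prop :=
  (∀ x, 0 < T x) ∧
    ∀ β : C(X, ℝ), (∀ x, β x = (T x)⁻¹) → ∀ p ∈ P, p.2 β ≤ p.1 η

/-- A Clausius–Duhem temperature scale. -/
def IsCDTemp (P : Set (VSp X)) (T : C(X, ℝ)) : Prop :=
  ∃ η : C(X, ℝ), IsCDPair P η T

/-- Two states are of the same hotness: both `(0, δ_a − δ_b)` and `(0, δ_b − δ_a)`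
belong to `\hat P`. -/
def SameHotness (P : Set (VSp X)) (a b : X) : Prop :=
  ((0 : Meas X), dirac a - dirac b) ∈ hatP P ∧
    ((0 : Meas X), dirac b - dirac a) ∈ hatP P

/-- The hotness level of a state. -/
def hotnessLevel (P : Set (VSp X)) (a : X) : Set X :=
  {b | SameHotness P a b}

/-- A subset of the state space that is a hotness level. -/
def IsHotnessLevel (P : Set (VSp X)) (h : Set X) : Prop :=
  ∃ a : X, h = hotnessLevel P a

/-- The (signed) measure `μ` is supported in the set `A`: `μ` annihilates every
continuous function vanishing on `A`. -/
def SuppIn (μ : Meas X) (A : Set X) : Prop :=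
  ∀ f : C(X, ℝ), (∀ x ∈ A, f x = 0) → μ f = 0

/-- `\hat Q` contains a passive heat transfer from hotness level `h` to `h'`:
an element `(0, μ − μ')` of `\hat Q` with `μ, μ'` nonnegative, `supp μ ⊆ h`,
`supp μ' ⊆ h'` and `μ(h) = μ'(h') > 0` (the common value being the total mass). -/
def IsPassiveHT (Q : Set (VSp X)) (h h' : Set X) : Prop :=
  ∃ μ μ' : Meas X, μ ∈ PosMeas X ∧ μ' ∈ PosMeas X ∧ SuppIn μ h ∧ SuppIn μ' h' ∧
    μ (1 : C(X, ℝ)) = μ' (1 : C(X, ℝ)) ∧ 0 < μ (1 : C(X, ℝ)) ∧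
    ((0 : Meas X), μ - μ') ∈ hatP Q

/-- Hotness level `h'` is hotter than `h`: the levels are distinct and every
thermodynamical theory whose closed process cone contains `P` together with a
passive heat transfer from `h` to `h'` fails to be a Kelvin–Planck theory. -/
def Hotter (P : Set (VSp X)) (h' h : Set X) : Prop :=
  h' ≠ h ∧ ∀ Pd : Set (VSp X), IsThermoTheory Pd → P ⊆ hatP Pd →
    IsPassiveHT Pd h h' → ¬ IsKelvinPlanck Pd

/-- State `a` is hotter than state `b`. -/
def HotterState (P : Set (VSp X)) (a b : X) : Prop :=
  Hotter P (hotnessLevel P a) (hotnessLevel P b)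

/-- A Carnot element of the theory `P` operating between hotness levels `h'` and
`h`: a reversible cyclic element `(0, μ' − μ)` with `μ', μ` nonzero nonnegative
measures supported in `h'`, `h` respectively. -/
def IsCarnotBetween (P : Set (VSp X)) (h' h : Set X) (p : VSp X) : Prop :=
  p ∈ hatP P ∧ -p ∈ hatP P ∧
    ∃ μ' μ : Meas X, μ' ∈ PosMeas X ∧ μ ∈ PosMeas X ∧ μ' ≠ 0 ∧ μ ≠ 0 ∧
      SuppIn μ' h' ∧ SuppIn μ h ∧ p = ((0 : Meas X), μ' - μ)

end

section Aux

open Topology Filter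


lemma weakDual_rep {E : Type*} [AddCommGroup E] [Module ℝ E] [TopologicalSpace E]
    (φ : WeakDual ℝ E →L[ℝ] ℝ) : ∃ g : E, ∀ μ : WeakDual ℝ E, φ μ = μ g := by
  have hU : φ ⁻¹' (Metric.ball 0 1) ∈ 𝓝 (0 : WeakDual ℝ E) := by
    have := φ.continuous.continuousAt (x := (0 : WeakDual ℝ E))
    have h0 : φ 0 = 0 := map_zero φ
    exact this (by rw [h0]; exact Metric.ball_mem_nhds 0 one_pos)
  have hind : (𝓝 (0 : WeakDual ℝ E)) =
      Filter.comap (fun (μ : WeakDual ℝ E) (y : E) => μ y) (𝓝 (fun _ : E => (0:ℝ))) := by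
    exact nhds_induced _ _
  rw [hind] at hU
  obtain ⟨V, hV, hVsub⟩ := hU
  rw [nhds_pi] at hV
  obtain ⟨I, hIfin, t, ht, hIt⟩ := (Filter.mem_pi).1 hV
  -- kernel containment
  have hker : ∀ μ : WeakDual ℝ E, (∀ i ∈ I, μ i = 0) → φ μ = 0 := by
    intro μ hμ
    by_contra hne
    have hmem : ∀ c : ℝ, (c • μ : WeakDual ℝ E) ∈ φ ⁻¹' (Metric.ball 0 1) := by
      intro c
      apply hVsub
      apply hIt
      intro i hi
      have hz : (c • μ) i = 0 := by
        rw [show (c • μ) i = c * μ i from rfl, hμ i hi, mul_zero]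
      simpa [hz] using mem_of_mem_nhds (ht i)
    have h2 := hmem (2 / φ μ)
    simp only [mem_preimage, Metric.mem_ball, dist_zero_right, map_smul, smul_eq_mul] at h2
    rw [div_mul_cancel₀ 2 hne] at h2
    norm_num at h2
  haveI := hIfin.fintype
  have hspan : (φ : WeakDual ℝ E →ₗ[ℝ] ℝ) ∈ Submodule.span ℝ
      (Set.range fun i : I => ((topDualPairing ℝ E).flip (i : E) : WeakDual ℝ E →ₗ[ℝ] ℝ)) := by
    apply mem_span_of_iInf_ker_le_ker
    intro μ hμ
    simp only [Submodule.mem_iInf, LinearMap.mem_ker] at hμ ⊢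
    apply hker
    intro i hi
    exact hμ ⟨i, hi⟩
  obtain ⟨c, hc⟩ := (Submodule.mem_span_range_iff_exists_fun (M := WeakDual ℝ E →ₗ[ℝ] ℝ) ℝ).1 hspan
  refine ⟨∑ i : I, c i • (i : E), fun μ => ?_⟩
  have hKμ := congrArg (fun K : WeakDual ℝ E →ₗ[ℝ] ℝ => K μ) hc
  simp only [LinearMap.coe_sum, Finset.sum_apply, LinearMap.smul_apply,
    LinearMap.flip_apply, topDualPairing_apply, smul_eq_mul] at hKμ
  rw [show φ μ = ((φ : WeakDual ℝ E →ₗ[ℝ] ℝ) μ) from rfl, ← hKμ, map_sum]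
  refine Finset.sum_congr rfl fun i _ => ?_
  rw [map_smul, smul_eq_mul]; rfl


variable {X : Type*} [TopologicalSpace X]

lemma mem_hatP_of_mem {P : Set (VSp X)} {p : VSp X} (hp : p ∈ P) : p ∈ hatP P :=
  subset_closure ⟨1, zero_le_one, p, hp, (one_smul ℝ p).symm⟩

lemma hatP_smul_mem {P : Set (VSp X)} {p : VSp X} (hp : p ∈ hatP P) {c : ℝ} (hc : 0 ≤ c) :
    c • p ∈ hatP P := by
  refine map_mem_closure (continuous_const_smul c) hp ?_
  rintro q ⟨c', hc', r, hr, rfl⟩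
  exact ⟨c * c', mul_nonneg hc hc', r, hr, smul_smul c c' r⟩

end Aux

/-- **Lemma.** Let `(X, P)` be a Kelvin–Planck theory with Clausius–Duhem pair
`(η⁰, T⁰)`, and let `(v, w) ∈ V(X)` satisfy `∫ η⁰ dv − ∫ (1/T⁰) dw = 0`.
If `(v, w) ∉ \hat P`, then there is another Clausius–Duhem pair `(η, T)` with
`∫ η dv − ∫ (1/T) dw < 0`. -/
theorem cd_pair_with_strict_inequality_of_not_mem
    {X : Type*} [TopologicalSpace X] [CompactSpace X] [T2Space X]
    (P : Set (VSp X)) (hP : IsKelvinPlanck P)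
    (η₀ T₀ β₀ : C(X, ℝ)) (hpair : IsCDPair P η₀ T₀) (hβ₀ : ∀ x, β₀ x = (T₀ x)⁻¹)
    (v w : Meas X) (hv : v (1 : C(X, ℝ)) = 0)
    (heq : v η₀ - w β₀ = 0)
    (hnot : ((v, w) : VSp X) ∉ hatP P) :
    ∃ η T β : C(X, ℝ), IsCDPair P η T ∧ (∀ x, β x = (T x)⁻¹) ∧
      v η - w β < 0 := by
  classical
  -- `(0,0)` belongs to `\hat P`
  have h00 : (((0 : Meas X), (0 : Meas X)) : VSp X) ∈ hatP P := by
    have h := hP.2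
    have : (((0 : Meas X), (0 : Meas X)) : VSp X) ∈
        hatP P ∩ (({0} : Set (Meas X)) ×ˢ PosMeas X) := by
      rw [h]; exact rfl
    exact this.1
  -- the state space is nonempty
  rcases isEmpty_or_nonempty X with hX | hX
  · haveI : Subsingleton C(X, ℝ) := ⟨fun f g => ContinuousMap.ext fun x => isEmptyElim x⟩
    have hv0 : v = 0 := DFunLike.ext _ _ fun f => by
      rw [Subsingleton.elim f (0 : C(X, ℝ)), map_zero, map_zero]
    have hw0 : w = 0 := DFunLike.ext _ _ fun f => by
      rw [Subsingleton.elim f (0 : C(X, ℝ)), map_zero, map_zero]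
    exact absurd (by rw [hv0, hw0]; exact h00) hnot
  -- separate `(v,w)` from the closed convex cone `\hat P`
  haveI : LocallyConvexSpace ℝ (Meas X) := WeakBilin.locallyConvexSpace
  obtain ⟨f, u, hfu, huf⟩ :=
    geometric_hahn_banach_closed_point (hP.1.2) isClosed_closure hnot
  have hu : 0 < u := by
    have h0 := hfu _ h00
    have := map_zero f
    rw [← Prod.mk_zero_zero] at this
    rwa [this] at h0
  have hf_le : ∀ p ∈ hatP P, f p ≤ 0 := by
    intro p hp
    by_contra hpos
    push_neg at hpos
    have hc : (0:ℝ) ≤ u / f p := le_of_lt (div_pos hu hpos)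
    have := hfu _ (hatP_smul_mem hp hc)
    rw [map_smul, smul_eq_mul, div_mul_cancel₀ u (ne_of_gt hpos)] at this
    exact lt_irrefl u this
  -- represent `f` by a pair of continuous functions
  obtain ⟨g, hg⟩ := weakDual_rep (f.comp (ContinuousLinearMap.inl ℝ (Meas X) (Meas X)))
  obtain ⟨h, hh⟩ := weakDual_rep (f.comp (ContinuousLinearMap.inr ℝ (Meas X) (Meas X)))
  have hf_rep : ∀ p : VSp X, f p = p.1 g + p.2 h := by
    intro p
    have hsplit : p = ((p.1, (0 : Meas X)) : VSp X) + ((0 : Meas X), p.2) := by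
      ext <;> simp
    rw [hsplit, map_add]
    have h1 : f ((p.1, (0 : Meas X)) : VSp X) = p.1 g := hg p.1
    have h2 : f (((0 : Meas X), p.2) : VSp X) = p.2 h := hh p.2
    rw [h1, h2]
    simp
  have hvw : 0 < v g + w h := by
    have := huf
    rw [hf_rep (v, w)] at this
    exact lt_trans hu this
  -- positivity of `β₀` and choice of `ε`
  have hβ₀pos : ∀ x, 0 < β₀ x := fun x => by
    rw [hβ₀ x]; exact inv_pos.2 (hpair.1 x)
  obtain ⟨xm, -, hxm⟩ := isCompact_univ.exists_isMinOn (univ_nonempty)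
    β₀.continuous.continuousOn
  set m : ℝ := β₀ xm with hm
  have hmpos : 0 < m := hβ₀pos xm
  set M : ℝ := ‖h‖ with hM
  have hMnn : 0 ≤ M := norm_nonneg h
  set ε : ℝ := m / (M + 1) with hε
  have hεpos : 0 < ε := div_pos hmpos (by linarith)
  have hβpos : ∀ x, 0 < β₀ x + ε * h x := by
    intro x
    have h1 : |h x| ≤ M := by
      have := h.norm_coe_le_norm x
      simpa [Real.norm_eq_abs] using this
    have h2 : m ≤ β₀ x := hxm (mem_univ x)
    have h3 : ε * |h x| ≤ ε * M := by nlinarith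
    have h4 : ε * M < m := by
      rw [hε, div_mul_eq_mul_div, div_lt_iff₀ (by linarith : (0:ℝ) < M + 1)]
      nlinarith
    nlinarith [neg_abs_le (h x), hεpos.le]
  -- the new pair
  set β : C(X, ℝ) := β₀ + ε • h with hβdef
  have hβx : ∀ x, β x = β₀ x + ε * h x := fun x => by
    simp [hβdef]
  set T : C(X, ℝ) := ⟨fun x => (β x)⁻¹,
    β.continuous.inv₀ (fun x => by rw [hβx x]; exact ne_of_gt (hβpos x))⟩ with hTdef
  have hTx : ∀ x, T x = (β x)⁻¹ := fun x => rfl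
  have hTpos : ∀ x, 0 < T x := fun x => by
    rw [hTx x, hβx x]; exact inv_pos.2 (hβpos x)
  have hβT : ∀ x, β x = (T x)⁻¹ := fun x => by
    rw [hTx x, inv_inv]
  set η : C(X, ℝ) := η₀ - ε • g with hηdef
  refine ⟨η, T, β, ⟨hTpos, ?_⟩, hβT, ?_⟩
  · intro β' hβ' p hp
    have hβ'β : β' = β := ContinuousMap.ext fun x => by rw [hβ' x, hβT x]
    subst hβ'β
    have hCD : p.2 β₀ ≤ p.1 η₀ := hpair.2 β₀ hβ₀ p hp
    have hle : p.1 g + p.2 h ≤ 0 := by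
      have := hf_le p (mem_hatP_of_mem hp)
      rwa [hf_rep p] at this
    have e1 : p.2 β = p.2 β₀ + ε * p.2 h := by
      rw [hβdef, map_add, map_smul, smul_eq_mul]
    have e2 : p.1 η = p.1 η₀ - ε * p.1 g := by
      rw [hηdef, map_sub, map_smul, smul_eq_mul]
    rw [e1, e2]
    nlinarith
  · have e1 : w β = w β₀ + ε * w h := by
      rw [hβdef, map_add, map_smul, smul_eq_mul]
    have e2 : v η = v η₀ - ε * v g := by
      rw [hηdef, map_sub, map_smul, smul_eq_mul]
    rw [e1, e2]
    nlinarith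
end

section
/- Let (Σ,P) be a Kelvin–Planck theory and let h' and h be distinct hotness levels. The following are equivalent: (i) h' is hotter than h, i.e., every thermodynamical theory (Σ,P†) for which \hat{P†} contains P and also contains a passive heat transfer from h to h' fails to be a Kelvin–Planck theory; (ii) T(σ') > T(σ) for every Clausius–Duhem temperature scale T ∈ T_CD and all σ' ∈ h', σ ∈ h. -/
open Set

namespace CDAux

open Filter Topology

variable {X : Type*} [TopologicalSpace X]

lemma eval_cont (f : C(X, ℝ)) : Continuous fun μ : Meas X => μ f :=
  WeakBilin.eval_continuous (topDualPairing ℝ C(X, ℝ)) f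

lemma subset_hatP (Q : Set (VSp X)) : Q ⊆ hatP Q := fun p hp =>
  subset_closure ⟨1, zero_le_one, p, hp, (one_smul ℝ p).symm⟩

lemma smul_mem_hatP {Q : Set (VSp X)} {c : ℝ} (hc : 0 ≤ c) {x : VSp X} (hx : x ∈ hatP Q) :
    c • x ∈ hatP Q := by
  have h1 : c • x ∈ closure ((c • ·) '' coneOf Q) :=
    image_closure_subset_closure_image (continuous_const_smul c) ⟨x, hx, rfl⟩
  refine closure_mono ?_ h1
  rintro _ ⟨y, ⟨c', hc', p, hp, rfl⟩, rfl⟩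
  exact ⟨c * c', mul_nonneg hc hc', p, hp, smul_smul c c' p⟩

lemma hatP_mono' {Q R : Set (VSp X)} (h : Q ⊆ hatP R) : hatP Q ⊆ hatP R := by
  refine closure_minimal ?_ isClosed_closure
  rintro _ ⟨c, hc, p, hp, rfl⟩
  exact smul_mem_hatP hc (h hp)

@[simp] lemma meas_smul_apply (c : ℝ) (μ : Meas X) (f : C(X, ℝ)) : (c • μ) f = c * μ f := rfl
@[simp] lemma meas_add_apply (μ ν : Meas X) (f : C(X, ℝ)) : (μ + ν) f = μ f + ν f := rfl
@[simp] lemma meas_sub_apply (μ ν : Meas X) (f : C(X, ℝ)) : (μ - ν) f = μ f - ν f := rfl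
@[simp] lemma meas_neg_apply (μ : Meas X) (f : C(X, ℝ)) : (-μ) f = -(μ f) := rfl
@[simp] lemma meas_zero_apply (f : C(X, ℝ)) : (0 : Meas X) f = 0 := rfl

lemma hatP_le {Q : Set (VSp X)} {η β : C(X, ℝ)} (h : ∀ p ∈ Q, p.2 β ≤ p.1 η) :
    ∀ p ∈ hatP Q, p.2 β ≤ p.1 η := by
  have hS : IsClosed {x : VSp X | x.2 β ≤ x.1 η} :=
    isClosed_le ((eval_cont β).comp continuous_snd) ((eval_cont η).comp continuous_fst)
  intro p hp
  refine hS.closure_subset_iff.mpr ?_ hp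
  rintro _ ⟨c, hc, q, hq, rfl⟩
  simp only [mem_setOf_eq, Prod.smul_fst, Prod.smul_snd, meas_smul_apply]
  exact mul_le_mul_of_nonneg_left (h q hq) hc

lemma hatP_fst_one {Q : Set (VSp X)} (hQ : ∀ p ∈ Q, p.1 (1 : C(X, ℝ)) = 0) :
    ∀ p ∈ hatP Q, p.1 (1 : C(X, ℝ)) = 0 := by
  have hS : IsClosed {x : VSp X | x.1 (1 : C(X, ℝ)) = 0} :=
    isClosed_eq ((eval_cont 1).comp continuous_fst) continuous_const
  intro p hp
  refine hS.closure_subset_iff.mpr ?_ hp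
  rintro _ ⟨c, hc, q, hq, rfl⟩
  simp only [mem_setOf_eq, Prod.smul_fst, meas_smul_apply, hQ q hq, mul_zero]

lemma posMeas_mono {μ : Meas X} (hμ : μ ∈ PosMeas X) {f g : C(X, ℝ)} (h : ∀ x, f x ≤ g x) :
    μ f ≤ μ g := by
  have h0 := hμ (g - f) (fun x => by simpa [sub_nonneg] using h x)
  rw [map_sub] at h0
  linarith

lemma zero_posMeas : (0 : Meas X) ∈ PosMeas X := fun f _ => le_of_eq rfl

lemma dirac_posMeas (x : X) : dirac x ∈ PosMeas X := fun f hf => hf x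

lemma posMeas_eq_zero [CompactSpace X] {μ : Meas X} (hμ : μ ∈ PosMeas X)
    (h1 : μ (1 : C(X, ℝ)) = 0) : μ = 0 := by
  refine ContinuousLinearMap.ext fun f => ?_
  have habs : ∀ x, |f x| ≤ ‖f‖ := fun x => by
    simpa [Real.norm_eq_abs] using f.norm_coe_le_norm x
  have h1' : μ f ≤ μ (‖f‖ • (1 : C(X, ℝ))) :=
    posMeas_mono hμ fun x => by simpa using (le_abs_self (f x)).trans (habs x)
  have h2' : μ (-(‖f‖ • (1 : C(X, ℝ)))) ≤ μ f :=
    posMeas_mono hμ fun x => by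
      simpa using (neg_le_of_abs_le (habs x))
  rw [map_smul, smul_eq_mul, h1, mul_zero] at h1'
  rw [map_neg, map_smul, smul_eq_mul, h1, mul_zero, neg_zero] at h2'
  exact le_antisymm h1' (show (0:ℝ) ≤ μ f by simpa using h2')

end CDAux

namespace CDAux
open Filter Topology
variable {X : Type*} [TopologicalSpace X]

lemma exists_rep (g : Meas X →L[ℝ] ℝ) : ∃ y : C(X, ℝ), ∀ μ : Meas X, g μ = μ y := by
  classical
  have hmem : g ⁻¹' (Metric.ball (0 : ℝ) 1) ∈ 𝓝 (0 : Meas X) := by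
    have := g.continuous.continuousAt (x := 0)
    refine this.preimage_mem_nhds ?_
    simpa using Metric.ball_mem_nhds (0 : ℝ) one_pos
  have hind : 𝓝 (0 : Meas X) =
      Filter.comap (fun (x : Meas X) (y : C(X, ℝ)) => x y)
        (𝓝 (fun y => (0 : Meas X) y)) :=
    nhds_induced _ 0
  rw [hind, Filter.mem_comap] at hmem
  obtain ⟨s, hs, hsub⟩ := hmem
  have hs' : s ∈ Filter.pi fun y : C(X, ℝ) => 𝓝 ((0 : Meas X) y) := by
    rw [← nhds_pi]; exact hs
  obtain ⟨I, hIfin, t, ht, hItsub⟩ := Filter.mem_pi.mp hs'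
  -- key vanishing property
  have key : ∀ x : Meas X, (∀ y ∈ I, x y = 0) → g x = 0 := by
    intro x hx
    by_contra hgx
    have hball : ∀ c : ℝ, |c * g x| < 1 := by
      intro c
      have hmempi : (fun y => (c • x) y) ∈ I.pi t := by
        intro i hi
        show (c • x) i ∈ t i
        have h0 : (c • x) i = 0 := by rw [meas_smul_apply, hx i hi, mul_zero]
        rw [h0]
        exact mem_of_mem_nhds (ht i)
      have hmb : c • x ∈ g ⁻¹' Metric.ball (0 : ℝ) 1 := hsub (hItsub hmempi)
      rwa [Set.mem_preimage, Metric.mem_ball, dist_zero_right, map_smul, smul_eq_mul,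
        Real.norm_eq_abs] at hmb
    have h2 := hball (2 / g x)
    rw [div_mul_cancel₀ 2 hgx] at h2
    norm_num at h2
  -- linear algebra
  let F := hIfin.toFinset
  let L : F → (Meas X →ₗ[ℝ] ℝ) := fun i =>
    { toFun := fun μ => μ (i : C(X, ℝ))
      map_add' := fun μ ν => rfl
      map_smul' := fun c μ => rfl }
  have hker : (⨅ i : F, LinearMap.ker (L i)) ≤ LinearMap.ker (g : Meas X →ₗ[ℝ] ℝ) := by
    intro x hx
    rw [Submodule.mem_iInf] at hx
    refine LinearMap.mem_ker.mpr (key x fun y hy => ?_)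
    have := hx ⟨y, hIfin.mem_toFinset.mpr hy⟩
    exact LinearMap.mem_ker.mp this
  have hspan := mem_span_of_iInf_ker_le_ker hker
  obtain ⟨c, hc⟩ := (Submodule.mem_span_range_iff_exists_fun ℝ).mp hspan
  refine ⟨∑ i : F, c i • (i : C(X, ℝ)), fun μ => ?_⟩
  have := congrArg (fun φ : Meas X →ₗ[ℝ] ℝ => φ μ) hc
  simp only [LinearMap.coe_sum, Finset.sum_apply, LinearMap.smul_apply] at this
  rw [show (g : Meas X →ₗ[ℝ] ℝ) μ = g μ from rfl] at this
  rw [← this, map_sum]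
  refine Finset.sum_congr rfl fun i _ => ?_
  rw [map_smul]
  rfl

end CDAux

namespace CDAux
open Filter Topology
variable {X : Type*} [TopologicalSpace X]

instance instLocallyConvexMeas : LocallyConvexSpace ℝ (Meas X) :=
  WeakBilin.locallyConvexSpace (B := topDualPairing ℝ C(X, ℝ))

lemma isClosed_posMeas : IsClosed (PosMeas X) := by
  have : PosMeas X = ⋂ f : {f : C(X, ℝ) // ∀ x, 0 ≤ f x},
      {μ : Meas X | 0 ≤ μ f.val} := by
    ext μ
    constructor
    · intro h
      exact Set.mem_iInter.mpr fun f => h f.val f.prop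
    · intro h f hf
      exact Set.mem_iInter.mp h ⟨f, hf⟩
  rw [this]
  exact isClosed_iInter fun f => isClosed_le continuous_const (eval_cont f.val)

lemma probs_convex : Convex ℝ {π : Meas X | π ∈ PosMeas X ∧ π (1 : C(X, ℝ)) = 1} := by
  rintro π ⟨hπ, hπ1⟩ ρ ⟨hρ, hρ1⟩ p q hp hq hpq
  constructor
  · intro f hf
    have h1 := hπ f hf
    have h2 := hρ f hf
    have : (p • π + q • ρ) f = p * π f + q * ρ f := rfl
    rw [this]
    have := mul_nonneg hp h1
    have := mul_nonneg hq h2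
    linarith
  · have : (p • π + q • ρ) (1 : C(X, ℝ)) = p * π 1 + q * ρ 1 := rfl
    rw [this, hπ1, hρ1]; linarith

lemma isCompact_probs [CompactSpace X] :
    IsCompact {π : Meas X | π ∈ PosMeas X ∧ π (1 : C(X, ℝ)) = 1} := by
  refine IsCompact.of_isClosed_subset
    (WeakDual.isCompact_closedBall (𝕜 := ℝ) (E := C(X, ℝ)) 0 1) ?_ ?_
  · exact isClosed_posMeas.inter (isClosed_eq (eval_cont 1) continuous_const)
  · rintro π ⟨hpos, h1⟩
    simp only [Set.mem_preimage, Metric.mem_closedBall, dist_zero_right]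
    refine ContinuousLinearMap.opNorm_le_bound _ zero_le_one fun f => ?_
    have habs : ∀ x, |f x| ≤ ‖f‖ := fun x => by
      simpa [Real.norm_eq_abs] using f.norm_coe_le_norm x
    have hub : π f ≤ ‖f‖ := by
      have := posMeas_mono hpos (f := f) (g := ‖f‖ • (1 : C(X, ℝ)))
        (fun x => by simpa using (le_abs_self (f x)).trans (habs x))
      rwa [map_smul, smul_eq_mul, h1, mul_one] at this
    have hlb : -‖f‖ ≤ π f := by
      have := posMeas_mono hpos (f := -f) (g := ‖f‖ • (1 : C(X, ℝ)))
        (fun x => by simpa using (neg_le_abs (f x)).trans (habs x))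
      rw [map_neg, map_smul, smul_eq_mul, h1, mul_one] at this
      linarith
    rw [Real.norm_eq_abs, one_mul, abs_le]
    exact ⟨by simpa [Real.norm_eq_abs] using hlb, by simpa [Real.norm_eq_abs] using hub⟩

/-- Existence of a Clausius–Duhem pair for a Kelvin–Planck theory (Hahn–Banach). -/
lemma exists_CD_of_KP [CompactSpace X] {Q : Set (VSp X)} (hQ : IsKelvinPlanck Q) :
    ∃ η β : C(X, ℝ), (∀ x, 0 < β x) ∧ ∀ p ∈ hatP Q, p.2 β ≤ p.1 η := by
  classical
  set K : Set (VSp X) :=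
    ({0} : Set (Meas X)) ×ˢ {π : Meas X | π ∈ PosMeas X ∧ π (1 : C(X, ℝ)) = 1} with hK
  have hKcompact : IsCompact K := isCompact_singleton.prod isCompact_probs
  have hKconvex : Convex ℝ K := (convex_singleton 0).prod probs_convex
  have hdisj : Disjoint (hatP Q) K := by
    rw [Set.disjoint_left]
    rintro x hx ⟨hx1, hpos, h1⟩
    have : x ∈ hatP Q ∩ (({0} : Set (Meas X)) ×ˢ PosMeas X) := ⟨hx, hx1, hpos⟩
    rw [hQ.2] at this
    rw [Set.mem_singleton_iff] at this
    rw [this] at h1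
    simp at h1
  obtain ⟨f, u, v, hfu, huv, hvf⟩ :=
    geometric_hahn_banach_closed_compact hQ.1.2 isClosed_closure hKconvex hKcompact hdisj
  have h00 : ((0, 0) : VSp X) ∈ hatP Q := by
    have : ((0, 0) : VSp X) ∈ hatP Q ∩ (({0} : Set (Meas X)) ×ˢ PosMeas X) := by
      rw [hQ.2]; rfl
    exact this.1
  have hupos : 0 < u := by
    have := hfu _ h00
    rwa [show ((0, 0) : VSp X) = 0 from rfl, map_zero] at this
  have hfle : ∀ x ∈ hatP Q, f x ≤ 0 := by
    intro x hx
    by_contra hpos'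
    push_neg at hpos'
    have hmem := smul_mem_hatP (le_of_lt (div_pos hupos hpos')) hx
    have := hfu _ hmem
    rw [map_smul, smul_eq_mul, div_mul_cancel₀ u (ne_of_gt hpos')] at this
    exact lt_irrefl u this
  obtain ⟨γ, hγ⟩ := exists_rep (f.comp (ContinuousLinearMap.inl ℝ (Meas X) (Meas X)))
  obtain ⟨β, hβ⟩ := exists_rep (f.comp (ContinuousLinearMap.inr ℝ (Meas X) (Meas X)))
  have hsplit : ∀ z : VSp X, f z = z.1 γ + z.2 β := by
    intro z
    have e1 : f ((z.1, 0) : VSp X) = z.1 γ := hγ z.1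
    have e2 : f ((0, z.2) : VSp X) = z.2 β := hβ z.2
    have hz : f z = f ((z.1, 0) : VSp X) + f ((0, z.2) : VSp X) := by
      rw [← map_add]
      congr 1
      simp
    rw [hz, e1, e2]
  refine ⟨-γ, β, ?_, ?_⟩
  · intro x
    have hdm : ((0, dirac x) : VSp X) ∈ K := by
      refine ⟨rfl, dirac_posMeas x, rfl⟩
    have := hvf _ hdm
    rw [hsplit] at this
    simp only [meas_zero_apply, zero_add] at this
    have : v < dirac x β := this
    have hdβ : dirac x β = β x := rfl
    linarith [hupos, huv]
  · intro p hp
    have := hfle p hp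
    rw [hsplit] at this
    have : p.2 β ≤ -(p.1 γ) := by linarith
    rw [map_neg]
    linarith

end CDAux


open CDAux in
/-- **Theorem.** Let `(X, P)` be a Kelvin–Planck theory and let `h' = [a]`, `h = [b]`
be distinct hotness levels.  The following are equivalent:
(i) `h'` is hotter than `h`;
(ii) `T σ' > T σ` for every Clausius–Duhem temperature scale `T` and all
`σ' ∈ h'`, `σ ∈ h`. -/
theorem hotter_iff_temperature_gt
    {X : Type*} [TopologicalSpace X] [CompactSpace X] [T2Space X]
    (P : Set (VSp X)) (hP : IsKelvinPlanck P) (a b : X)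
    (hne : hotnessLevel P a ≠ hotnessLevel P b) :
    Hotter P (hotnessLevel P a) (hotnessLevel P b) ↔
      ∀ T : C(X, ℝ), IsCDTemp P T →
        ∀ a' ∈ hotnessLevel P a, ∀ b' ∈ hotnessLevel P b, T b' < T a' := by
  classical
  have : Nonempty X := ⟨a⟩
  have h00 : ((0, 0) : VSp X) ∈ hatP P := by
    have : ((0, 0) : VSp X) ∈ hatP P ∩ (({0} : Set (Meas X)) ×ˢ PosMeas X) := by
      rw [hP.2]; rfl
    exact this.1
  have h0' : (0 : VSp X) ∈ hatP P := h00
  constructor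
  · -- (i) → (ii)
    intro hH T hT a' ha' b' hb'
    by_contra hle'
    push_neg at hle'   -- T a' ≤ T b'
    obtain ⟨η, hTpos, hcd0⟩ := hT
    set β : C(X, ℝ) := ⟨fun x => (T x)⁻¹, T.continuous.inv₀ fun x => (hTpos x).ne'⟩ with hβdef
    have hβval : ∀ x, β x = (T x)⁻¹ := fun _ => rfl
    have hβpos : ∀ x, 0 < β x := fun x => inv_pos.mpr (hTpos x)
    have hcdP : ∀ p ∈ P, p.2 β ≤ p.1 η := hcd0 β hβval
    have hcdHat : ∀ p ∈ hatP P, p.2 β ≤ p.1 η := hatP_le hcdP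
    set v : VSp X := ((0 : Meas X), dirac b' - dirac a') with hv
    set Pd : Set (VSp X) := {z | ∃ p ∈ hatP P, ∃ t : ℝ, 0 ≤ t ∧ z = p + t • v} with hPdd
    have hPdcone : coneOf Pd = Pd := by
      ext z
      constructor
      · rintro ⟨c, hc, _, ⟨p, hp, t, ht, rfl⟩, rfl⟩
        refine ⟨c • p, smul_mem_hatP hc hp, c * t, mul_nonneg hc ht, ?_⟩
        rw [smul_add, smul_smul]
      · intro hz
        exact ⟨1, zero_le_one, z, hz, (one_smul ℝ z).symm⟩
    have hhatPd : hatP Pd = closure Pd := by rw [hatP, hPdcone]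
    have hPdsub : Pd ⊆ hatP Pd := subset_hatP Pd
    have hmemPd : ∀ p ∈ hatP P, p ∈ Pd := fun p hp => ⟨p, hp, 0, le_refl 0, by simp⟩
    have hvPd : v ∈ Pd := ⟨0, h0', 1, zero_le_one, by simp⟩
    have hthermoPd : IsThermoTheory Pd := by
      constructor
      · rintro z ⟨p, hp, t, ht, rfl⟩
        have h1 := hatP_fst_one hP.1.1 p hp
        show (p.1 + t • v.1) (1 : C(X, ℝ)) = 0
        rw [meas_add_apply, h1, meas_smul_apply]
        have : v.1 (1 : C(X, ℝ)) = 0 := rfl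
        rw [this, mul_zero, add_zero]
      · rw [hhatPd]
        refine Convex.closure ?_
        rintro z ⟨p, hp, t, ht, rfl⟩ z' ⟨p', hp', t', ht', rfl⟩ lam mu hlam hmu hlm
        refine ⟨lam • p + mu • p', hP.1.2 hp hp' hlam hmu hlm,
          lam * t + mu * t', by positivity, ?_⟩
        module
    have hPsubPd : P ⊆ hatP Pd := fun p hp => hPdsub (hmemPd p (subset_hatP P hp))
    have hPHT : IsPassiveHT Pd (hotnessLevel P b) (hotnessLevel P a) := by
      refine ⟨dirac b', dirac a', dirac_posMeas b', dirac_posMeas a',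
        fun f hf => hf b' hb', fun f hf => hf a' ha', rfl, ?_, ?_⟩
      · show (0 : ℝ) < 1
        exact one_pos
      · exact hPdsub hvPd
    refine hH.2 Pd hthermoPd hPsubPd hPHT ⟨hthermoPd, ?_⟩
    apply Set.eq_of_subset_of_subset
    · rintro x ⟨hx1, hx2, hx3⟩
      have hcdPd : ∀ z ∈ Pd, z.2 β ≤ z.1 η := by
        rintro z ⟨p, hp, t, ht, rfl⟩
        have h1 := hcdHat p hp
        have hβba : β b' ≤ β a' := by
          rw [hβval, hβval]
          exact inv_anti₀ (hTpos a') hle'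
        show (p.2 + t • v.2) β ≤ (p.1 + t • v.1) η
        have hv2 : v.2 β = β b' - β a' := rfl
        have hv1 : v.1 η = 0 := rfl
        rw [meas_add_apply, meas_add_apply, meas_smul_apply, meas_smul_apply, hv1, hv2,
          mul_zero, add_zero]
        nlinarith
      have h2 := hatP_le hcdPd x hx1
      have hx10 : x.1 = 0 := hx2
      rw [hx10, meas_zero_apply] at h2
      obtain ⟨x₀, -, hx₀⟩ :=
        isCompact_univ.exists_isMinOn univ_nonempty β.continuous.continuousOn
      rw [isMinOn_iff] at hx₀
      have hc : 0 < β x₀ := hβpos x₀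
      have hmono := posMeas_mono hx3 (f := β x₀ • (1 : C(X, ℝ))) (g := β)
        (fun y => by simpa using hx₀ y trivial)
      rw [map_smul, smul_eq_mul] at hmono
      have h1nonneg : 0 ≤ x.2 (1 : C(X, ℝ)) := hx3 1 (fun y => by norm_num)
      have hxz : x.2 (1 : C(X, ℝ)) = 0 := le_antisymm (by nlinarith) h1nonneg
      have hx20 : x.2 = 0 := posMeas_eq_zero hx3 hxz
      rw [Set.mem_singleton_iff, Prod.ext_iff]
      exact ⟨hx10, hx20⟩
    · intro x hx
      rw [Set.mem_singleton_iff] at hx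
      subst hx
      exact ⟨hPdsub (hmemPd _ h0'), rfl, zero_posMeas⟩
  · -- (ii) → (i)
    intro hT
    refine ⟨hne, ?_⟩
    intro Pd hPdthermo hPsub hPHT hKPd
    obtain ⟨η, β, hβpos, hineq⟩ := exists_CD_of_KP hKPd
    set T : C(X, ℝ) := ⟨fun x => (β x)⁻¹, β.continuous.inv₀ fun x => (hβpos x).ne'⟩ with hTdef
    have hTval : ∀ x, T x = (β x)⁻¹ := fun _ => rfl
    have hTpos : ∀ x, 0 < T x := fun x => inv_pos.mpr (hβpos x)
    have hCDT : IsCDTemp P T := by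
      refine ⟨η, hTpos, ?_⟩
      intro β' hβ' p hp
      have hβ'β : β' = β := ContinuousMap.ext fun x => by
        rw [hβ' x, hTval x, inv_inv]
      rw [hβ'β]
      exact hineq p (hPsub hp)
    have hPP : hatP P ⊆ hatP Pd := hatP_mono' hPsub
    have hconst : ∀ y : X, ∀ x ∈ hotnessLevel P y, β x = β y := by
      intro y x hx
      obtain ⟨h1, h2⟩ := hx
      have e1 : (dirac y - dirac x) β ≤ (0 : Meas X) η := hineq _ (hPP h1)
      have e2 : (dirac x - dirac y) β ≤ (0 : Meas X) η := hineq _ (hPP h2)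
      rw [meas_sub_apply, meas_zero_apply] at e1 e2
      have ey : dirac y β = β y := rfl
      have ex : dirac x β = β x := rfl
      linarith
    have haa : a ∈ hotnessLevel P a := by
      have hz : ((0 : Meas X), dirac a - dirac a) ∈ hatP P := by
        rw [sub_self]; exact h00
      exact ⟨hz, hz⟩
    have hbb : b ∈ hotnessLevel P b := by
      have hz : ((0 : Meas X), dirac b - dirac b) ∈ hatP P := by
        rw [sub_self]; exact h00
      exact ⟨hz, hz⟩
    have hlt := hT T hCDT a haa b hbb
    obtain ⟨μ, μ', hμpos, hμ'pos, hsuppμ, hsuppμ', hmass, hmasspos, hmem⟩ := hPHT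
    have hcdμ : (μ - μ') β ≤ (0 : Meas X) η := hineq _ hmem
    rw [meas_sub_apply, meas_zero_apply] at hcdμ
    have hμβ : μ β = β b * μ (1 : C(X, ℝ)) := by
      have h0 : μ (β - β b • (1 : C(X, ℝ))) = 0 :=
        hsuppμ _ (fun y hy => by simp [hconst b y hy])
      rw [map_sub, map_smul, smul_eq_mul] at h0
      linarith
    have hμ'β : μ' β = β a * μ (1 : C(X, ℝ)) := by
      have h0 : μ' (β - β a • (1 : C(X, ℝ))) = 0 :=
        hsuppμ' _ (fun y hy => by simp [hconst a y hy])
      rw [map_sub, map_smul, smul_eq_mul] at h0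
      rw [hmass]
      linarith
    have hba : β b ≤ β a := by
      rw [hμβ, hμ'β] at hcdμ
      nlinarith
    have hab : β a < β b := by
      have hlt' : (β b)⁻¹ < (β a)⁻¹ := hlt
      by_contra hcon
      push_neg at hcon
      have := inv_anti₀ (hβpos b) hcon
      linarith
    linarith
end

section
/- Let (Σ,P) be a Kelvin–Planck theory and let h' and h be distinct hotness levels. The following are equivalent: (i) h' is weakly hotter than h, i.e., \hat{P} contains an element (0,q) with q = μ' − μ + ν, where μ', μ, ν ∈ M₊(Σ), supp μ' ⊆ h', supp μ ⊆ h, and μ'(h') = μ(h) > 0; (ii) T(σ') ≥ T(σ) for every Clausius–Duhem temperature scale T ∈ T_CD and all σ' ∈ h', σ ∈ h. -/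
open Set

noncomputable section Aux

variable {X : Type*} [TopologicalSpace X]

-- ===== aux =====
lemma measAdd (μ ν : Meas X) (f : C(X,ℝ)) : (μ + ν) f = μ f + ν f := rfl
lemma measSmul (c : ℝ) (μ : Meas X) (f : C(X,ℝ)) : (c • μ) f = c * μ f := rfl
lemma measSub (μ ν : Meas X) (f : C(X,ℝ)) : (μ - ν) f = μ f - ν f := rfl
lemma measZero (f : C(X,ℝ)) : (0 : Meas X) f = 0 := rfl

lemma measEvalCont (f : C(X,ℝ)) : Continuous fun μ : Meas X => μ f :=
  WeakBilin.eval_continuous _ f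

lemma subset_hatP (P : Set (VSp X)) : P ⊆ hatP P := fun p hp =>
  subset_closure ⟨1, zero_le_one, p, hp, (one_smul ℝ p).symm⟩

lemma smul_mem_hatP {P : Set (VSp X)} {c : ℝ} (hc : 0 ≤ c) {p : VSp X}
    (hp : p ∈ hatP P) : c • p ∈ hatP P := by
  have hcont : Continuous fun q : VSp X => c • q := continuous_const_smul c
  have h1 : c • p ∈ closure ((fun q : VSp X => c • q) '' coneOf P) :=
    image_closure_subset_closure_image hcont ⟨p, hp, rfl⟩
  refine closure_mono ?_ h1
  rintro _ ⟨q, ⟨d, hd, r, hr, rfl⟩, rfl⟩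
  exact ⟨c * d, mul_nonneg hc hd, r, hr, (smul_smul c d r)⟩

lemma zero_mem_hatP {P : Set (VSp X)} (hne : (hatP P).Nonempty) :
    (0 : VSp X) ∈ hatP P := by
  obtain ⟨p, hp⟩ := hne
  simpa using smul_mem_hatP (le_refl (0:ℝ)) hp

/-- CD inequality extends to `hatP`. -/
lemma cd_on_hatP {P : Set (VSp X)} {η β : C(X,ℝ)}
    (h : ∀ p ∈ P, p.2 β ≤ p.1 η) :
    ∀ p ∈ hatP P, p.2 β ≤ p.1 η := by
  have hclosed : IsClosed {p : VSp X | p.2 β ≤ p.1 η} :=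
    isClosed_le ((measEvalCont β).comp continuous_snd)
      ((measEvalCont η).comp continuous_fst)
  have hcone : coneOf P ⊆ {p : VSp X | p.2 β ≤ p.1 η} := by
    rintro _ ⟨c, hc, p, hp, rfl⟩
    simp only [mem_setOf_eq, Prod.smul_snd, Prod.smul_fst, measSmul]
    exact mul_le_mul_of_nonneg_left (h p hp) hc
  exact fun p hp => closure_minimal hcone hclosed hp

/-- `β = 1/T` is constant on hotness levels. -/
lemma beta_const {P : Set (VSp X)} {η β : C(X,ℝ)}
    (h : ∀ p ∈ P, p.2 β ≤ p.1 η) {a x : X} (hx : x ∈ hotnessLevel P a) :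
    β x = β a := by
  obtain ⟨h1, h2⟩ := hx
  have e1 := cd_on_hatP h _ h1
  have e2 := cd_on_hatP h _ h2
  simp only [measSub, measZero] at e1 e2
  have da : dirac a β = β a := rfl
  have dx : dirac x β = β x := rfl
  rw [da, dx] at e1 e2
  linarith



lemma T_const {P : Set (VSp X)} {η T : C(X,ℝ)} (hpair : IsCDPair P η T)
    {a x : X} (hx : x ∈ hotnessLevel P a) : T x = T a := by
  obtain ⟨hTpos, hCD⟩ := hpair
  set β : C(X,ℝ) := ⟨fun x => (T x)⁻¹,
    Continuous.inv₀ T.continuous (fun x => ne_of_gt (hTpos x))⟩ with hβdef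
  have h := hCD β (fun _ => rfl)
  have hc : β x = β a := beta_const h hx
  have : (T x)⁻¹ = (T a)⁻¹ := hc
  exact inv_inj.mp this

lemma forward_dir (P : Set (VSp X)) (a b : X)
    (hyp : ∃ μ' μ ν : Meas X, μ' ∈ PosMeas X ∧ μ ∈ PosMeas X ∧ ν ∈ PosMeas X ∧
        SuppIn μ' (hotnessLevel P a) ∧ SuppIn μ (hotnessLevel P b) ∧
        μ' (1 : C(X, ℝ)) = μ (1 : C(X, ℝ)) ∧ 0 < μ (1 : C(X, ℝ)) ∧
        ((0 : Meas X), μ' - μ + ν) ∈ hatP P) :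
    ∀ T : C(X, ℝ), IsCDTemp P T →
        ∀ a' ∈ hotnessLevel P a, ∀ b' ∈ hotnessLevel P b, T b' ≤ T a' := by
  obtain ⟨μ', μ, ν, hμ'pos, hμpos, hνpos, hsupp', hsupp, hmass, hmasspos, hmem⟩ := hyp
  intro T hT a' ha' b' hb'
  obtain ⟨η, hpair⟩ := hT
  obtain ⟨hTpos, hCD⟩ := hpair
  set β : C(X,ℝ) := ⟨fun x => (T x)⁻¹,
    Continuous.inv₀ T.continuous (fun x => ne_of_gt (hTpos x))⟩ with hβdef
  have hβ : ∀ x, β x = (T x)⁻¹ := fun _ => rfl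
  have h := hCD β hβ
  have e1 : μ' β = β a * μ' (1:C(X,ℝ)) := by
    have hvan : ∀ x ∈ hotnessLevel P a, (β - (β a) • (1:C(X,ℝ))) x = 0 := by
      intro x hx
      have := beta_const h hx
      simp [this]
    have h0 := hsupp' _ hvan
    have hexp : μ' (β - (β a) • (1:C(X,ℝ))) = μ' β - β a * μ' 1 := by
      rw [map_sub, map_smul, smul_eq_mul]
    rw [hexp] at h0
    linarith
  have e2 : μ β = β b * μ (1:C(X,ℝ)) := by
    have hvan : ∀ x ∈ hotnessLevel P b, (β - (β b) • (1:C(X,ℝ))) x = 0 := by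
      intro x hx
      have := beta_const h hx
      simp [this]
    have h0 := hsupp _ hvan
    have hexp : μ (β - (β b) • (1:C(X,ℝ))) = μ β - β b * μ 1 := by
      rw [map_sub, map_smul, smul_eq_mul]
    rw [hexp] at h0
    linarith
  have e3 : 0 ≤ ν β := hνpos β (fun x => le_of_lt (inv_pos.mpr (hTpos x)))
  have hmain := cd_on_hatP h _ hmem
  simp only [measAdd, measSub, measZero] at hmain
  have hba : β a ≤ β b := by
    rw [e1, e2, hmass] at hmain
    nlinarith
  have hTba : T b ≤ T a := by
    have h1 : (T a)⁻¹ ≤ (T b)⁻¹ := by rw [← hβ a, ← hβ b]; exact hba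
    exact (inv_le_inv₀ (hTpos a) (hTpos b)).mp h1
  have hTa' : T a' = T a := T_const ⟨hTpos, hCD⟩ ha'
  have hTb' : T b' = T b := T_const ⟨hTpos, hCD⟩ hb'
  rw [hTa', hTb']
  exact hTba

-- ===== probability-like sets =====

def probIn (X : Type*) [TopologicalSpace X] (A : Set X) : Set (Meas X) :=
  {μ | μ ∈ PosMeas X ∧ μ (1:C(X,ℝ)) = 1 ∧ SuppIn μ A}

lemma isClosed_probIn (A : Set X) : IsClosed (probIn X A) := by
  have h1 : IsClosed (PosMeas X) := by
    have : PosMeas X =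
        ⋂ f ∈ {f : C(X,ℝ) | ∀ x, 0 ≤ f x}, {μ : Meas X | 0 ≤ μ f} := by
      ext μ; simp [PosMeas]
    rw [this]
    exact isClosed_biInter fun f _ => isClosed_le continuous_const (measEvalCont f)
  have h2 : IsClosed {μ : Meas X | μ (1:C(X,ℝ)) = 1} :=
    isClosed_eq (measEvalCont 1) continuous_const
  have h3 : IsClosed {μ : Meas X | SuppIn μ A} := by
    have : {μ : Meas X | SuppIn μ A} =
        ⋂ f ∈ {f : C(X,ℝ) | ∀ x ∈ A, f x = 0}, {μ : Meas X | μ f = 0} := by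
      ext μ; simp [SuppIn]
    rw [this]
    exact isClosed_biInter fun f _ => isClosed_eq (measEvalCont f) continuous_const
  have : probIn X A = PosMeas X ∩ ({μ : Meas X | μ (1:C(X,ℝ)) = 1} ∩
      {μ : Meas X | SuppIn μ A}) := by
    rfl
  rw [this]
  exact h1.inter (h2.inter h3)

lemma convex_probIn (A : Set X) : Convex ℝ (probIn X A) := by
  rintro μ ⟨hμp, hμ1, hμs⟩ ν ⟨hνp, hν1, hνs⟩ s t hs ht hst
  refine ⟨fun f hf => ?_, ?_, fun f hf => ?_⟩
  · show 0 ≤ (s • μ + t • ν) f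
    rw [measAdd, measSmul, measSmul]
    have h1 := hμp f hf; have h2 := hνp f hf
    positivity
  · show (s • μ + t • ν) (1:C(X,ℝ)) = 1
    rw [measAdd, measSmul, measSmul, hμ1, hν1]
    simpa using hst
  · show (s • μ + t • ν) f = 0
    rw [measAdd, measSmul, measSmul, hμs f hf, hνs f hf]
    ring

lemma dirac_mem_probIn {A : Set X} {x : X} (hx : x ∈ A) : dirac x ∈ probIn X A :=
  ⟨fun f hf => hf x, rfl, fun f hf => hf x hx⟩

lemma probIn_bounded [CompactSpace X] {A : Set X} {μ : Meas X} (hμ : μ ∈ probIn X A)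
    (f : C(X,ℝ)) : |μ f| ≤ ‖f‖ := by
  obtain ⟨hp, h1, _⟩ := hμ
  have habs : ∀ x, |f x| ≤ ‖f‖ := fun x => by
    rw [← Real.norm_eq_abs]; exact f.norm_coe_le_norm x
  have hub : 0 ≤ μ ((‖f‖ : ℝ) • (1:C(X,ℝ)) - f) := by
    apply hp
    intro x
    simp only [ContinuousMap.sub_apply, ContinuousMap.smul_apply, ContinuousMap.one_apply,
      smul_eq_mul, mul_one]
    linarith [(abs_le.mp (habs x)).2]
  have hlb : 0 ≤ μ ((‖f‖ : ℝ) • (1:C(X,ℝ)) + f) := by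
    apply hp
    intro x
    simp only [ContinuousMap.add_apply, ContinuousMap.smul_apply, ContinuousMap.one_apply,
      smul_eq_mul, mul_one]
    linarith [(abs_le.mp (habs x)).1]
  rw [map_sub, map_smul, smul_eq_mul, h1, mul_one] at hub
  rw [map_add, map_smul, smul_eq_mul, h1, mul_one] at hlb
  rw [abs_le]
  constructor <;> linarith

lemma isCompact_probIn [CompactSpace X] (A : Set X) : IsCompact (probIn X A) := by
  apply WeakDual.isCompact_of_bounded_of_closed
  · apply Bornology.IsBounded.subset
      (Metric.isBounded_closedBall (x := (0 : StrongDual ℝ C(X,ℝ))) (r := 1))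
    intro μ hμ
    rw [Metric.mem_closedBall]
    refine le_trans (le_of_eq (dist_zero_right μ)) ?_
    apply ContinuousLinearMap.opNorm_le_bound _ zero_le_one
    intro f
    rw [one_mul, Real.norm_eq_abs]
    exact probIn_bounded hμ f
  · exact isClosed_probIn A

lemma isCompact_convexJoin {E : Type*} [AddCommGroup E] [Module ℝ E] [TopologicalSpace E]
    [IsTopologicalAddGroup E] [ContinuousSMul ℝ E] {s t : Set E}
    (hs : IsCompact s) (ht : IsCompact t) : IsCompact (convexJoin ℝ s t) := by
  have heq : convexJoin ℝ s t =
      (fun p : ℝ × E × E => (1 - p.1) • p.2.1 + p.1 • p.2.2) '' ((Icc (0:ℝ) 1) ×ˢ s ×ˢ t) := by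
    ext z
    constructor
    · intro hz
      obtain ⟨x, hx, y, hy, hseg⟩ := mem_convexJoin.mp hz
      rw [segment_eq_image] at hseg
      obtain ⟨θ, hθ, rfl⟩ := hseg
      exact ⟨(θ, x, y), ⟨hθ, hx, hy⟩, rfl⟩
    · rintro ⟨⟨θ, x, y⟩, ⟨hθ, hx, hy⟩, rfl⟩
      refine mem_convexJoin.mpr ⟨x, hx, y, hy, ?_⟩
      rw [segment_eq_image]
      exact ⟨θ, hθ, rfl⟩
  rw [heq]
  apply IsCompact.image (isCompact_Icc.prod (hs.prod ht))
  apply Continuous.add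
  · exact ((continuous_const.sub continuous_fst).smul (continuous_fst.comp continuous_snd))
  · exact (continuous_fst.smul ((continuous_snd.comp continuous_snd)))



-- representation lemma
lemma exists_rep (G : Meas X →L[ℝ] ℝ) : ∃ f : C(X,ℝ), ∀ μ : Meas X, G μ = μ f := by
  have h0 : G ⁻¹' (Set.Ioo (-1:ℝ) 1) ∈ nhds (0 : Meas X) := by
    have : Set.Ioo (-1:ℝ) 1 ∈ nhds (G 0) := by
      rw [map_zero]; exact Ioo_mem_nhds (by norm_num) (by norm_num)
    exact G.continuous.continuousAt.preimage_mem_nhds this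
  erw [nhds_induced] at h0
  obtain ⟨U, hU, hsub⟩ := Filter.mem_comap.mp h0
  rw [nhds_pi] at hU
  obtain ⟨I, hIfin, t, ht, hpi⟩ := Filter.mem_pi.mp hU
  have : Finite I := hIfin.to_subtype
  set L : I → (Meas X →ₗ[ℝ] ℝ) := fun i =>
    { toFun := fun μ => μ (i : C(X,ℝ)), map_add' := fun _ _ => rfl,
      map_smul' := fun _ _ => rfl } with hL
  have hker : (⨅ i, LinearMap.ker (L i)) ≤ LinearMap.ker (G : Meas X →ₗ[ℝ] ℝ) := by
    intro μ hμ
    simp only [Submodule.mem_iInf, LinearMap.mem_ker] at hμ ⊢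
    simp only [ContinuousLinearMap.coe_coe]
    by_contra hne
    set c : ℝ := 2 * (G μ)⁻¹ with hc
    have hmem : c • μ ∈ G ⁻¹' (Set.Ioo (-1:ℝ) 1) := by
      apply hsub
      apply hpi
      intro f hf
      have : (c • μ) f = 0 := by
        have hf0 : μ f = 0 := hμ ⟨f, hf⟩
        rw [measSmul, hf0, mul_zero]
      show (c • μ) f ∈ t f
      rw [this]
      exact mem_of_mem_nhds (ht f)
    have : G (c • μ) = 2 := by
      have h1 : G (c • μ) = c * G μ := by rw [map_smul, smul_eq_mul]
      rw [h1, hc, mul_assoc, inv_mul_cancel₀ hne, mul_one]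
    rw [Set.mem_preimage, this] at hmem
    exact absurd hmem.2 (by norm_num)
  have hspan := mem_span_of_iInf_ker_le_ker (L := L) hker
  have : Fintype I := hIfin.fintype
  obtain ⟨c, hc⟩ := (Submodule.mem_span_range_iff_exists_fun ℝ).mp hspan
  refine ⟨∑ i, c i • (i : C(X,ℝ)), fun μ => ?_⟩
  have := LinearMap.congr_fun hc μ
  simp only [LinearMap.coe_sum, Finset.sum_apply, LinearMap.smul_apply, smul_eq_mul,
    ContinuousLinearMap.coe_coe] at this
  rw [← this]
  rw [map_sum]
  congr 1
  ext i
  rw [map_smul, smul_eq_mul]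
  rfl

instance measLCS : LocallyConvexSpace ℝ (Meas X) :=
  (WeakBilin.locallyConvexSpace :
    LocallyConvexSpace ℝ (WeakBilin (topDualPairing ℝ C(X,ℝ))))

lemma smul_mem_PosMeas {c : ℝ} (hc : 0 ≤ c) {μ : Meas X} (hμ : μ ∈ PosMeas X) :
    c • μ ∈ PosMeas X := fun f hf => by
  rw [measSmul]; exact mul_nonneg hc (hμ f hf)

lemma smul_SuppIn {c : ℝ} {μ : Meas X} {A : Set X} (hμ : SuppIn μ A) :
    SuppIn (c • μ) A := fun f hf => by rw [measSmul, hμ f hf, mul_zero]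

lemma reverse_dir [CompactSpace X] (P : Set (VSp X)) (hP : IsKelvinPlanck P) (a b : X)
    (h0 : (0 : VSp X) ∈ hatP P)
    (hni : ¬ (∃ μ' μ ν : Meas X, μ' ∈ PosMeas X ∧ μ ∈ PosMeas X ∧ ν ∈ PosMeas X ∧
        SuppIn μ' (hotnessLevel P a) ∧ SuppIn μ (hotnessLevel P b) ∧
        μ' (1 : C(X, ℝ)) = μ (1 : C(X, ℝ)) ∧ 0 < μ (1 : C(X, ℝ)) ∧
        ((0 : Meas X), μ' - μ + ν) ∈ hatP P)) :
    ∃ T : C(X,ℝ), IsCDTemp P T ∧ T a < T b := by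
  have haa : a ∈ hotnessLevel P a := by
    constructor <;> · show _ ∈ hatP P; rw [sub_self]; exact h0
  have hbb : b ∈ hotnessLevel P b := by
    constructor <;> · show _ ∈ hatP P; rw [sub_self]; exact h0
  set Sa := probIn X (hotnessLevel P a) with hSa
  set Sb := probIn X (hotnessLevel P b) with hSb
  set Su := probIn X (univ : Set X) with hSu
  set B2 : Set (VSp X) :=
    (fun z : Meas X × Meas X => ((0:Meas X), z.1 - z.2)) '' (Sa ×ˢ Sb) with hB2
  set P0 : Set (VSp X) := (fun ρ : Meas X => ((0:Meas X), ρ)) '' Su with hP0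
  set D := convexJoin ℝ B2 P0 with hD
  -- convexity of B2, P0
  have hB2conv : Convex ℝ B2 := by
    rintro _ ⟨⟨π₁, π₂⟩, ⟨h1, h2⟩, rfl⟩ _ ⟨⟨ρ₁, ρ₂⟩, ⟨h3, h4⟩, rfl⟩ s t hs ht hst
    refine ⟨(s • π₁ + t • ρ₁, s • π₂ + t • ρ₂),
      ⟨convex_probIn _ h1 h3 hs ht hst, convex_probIn _ h2 h4 hs ht hst⟩, ?_⟩
    simp only [Prod.smul_mk, Prod.mk_add_mk, smul_zero, add_zero, smul_sub,
      Prod.mk.injEq]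
    exact ⟨trivial, by abel⟩
  have hP0conv : Convex ℝ P0 := by
    rintro _ ⟨ρ₁, h1, rfl⟩ _ ⟨ρ₂, h2, rfl⟩ s t hs ht hst
    refine ⟨s • ρ₁ + t • ρ₂, convex_probIn _ h1 h2 hs ht hst, ?_⟩
    simp [Prod.smul_mk, Prod.mk_add_mk]
  have hDconv : Convex ℝ D := hB2conv.convexJoin hP0conv
  -- compactness
  have hB2comp : IsCompact B2 := by
    apply IsCompact.image ((isCompact_probIn _).prod (isCompact_probIn _))
    exact continuous_const.prodMk (continuous_fst.sub continuous_snd)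
  have hP0comp : IsCompact P0 := by
    apply IsCompact.image (isCompact_probIn _)
    exact continuous_const.prodMk continuous_id
  have hDcomp : IsCompact D := isCompact_convexJoin hB2comp hP0comp
  -- nonemptiness
  have hB2ne : B2.Nonempty :=
    ⟨_, ⟨(dirac a, dirac b), ⟨dirac_mem_probIn haa, dirac_mem_probIn hbb⟩, rfl⟩⟩
  have hP0ne : P0.Nonempty := ⟨_, ⟨dirac a, dirac_mem_probIn (mem_univ a), rfl⟩⟩
  -- disjointness
  have hdisj : Disjoint (hatP P) D := by
    rw [Set.disjoint_left]
    rintro p hp hpD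
    obtain ⟨x, hx, y, hy, hseg⟩ := mem_convexJoin.mp hpD
    obtain ⟨⟨π', π⟩, ⟨hπ', hπ⟩, rfl⟩ := hx
    obtain ⟨ρ, hρ, rfl⟩ := hy
    obtain ⟨s, t, hs, ht, hst, rfl⟩ := hseg
    have hpeq : s • ((0:Meas X), π' - π) + t • ((0:Meas X), ρ)
        = ((0:Meas X), s • π' - s • π + t • ρ) := by
      simp only [Prod.smul_mk, Prod.mk_add_mk, smul_zero, add_zero, smul_sub]
    rw [hpeq] at hp
    rcases eq_or_lt_of_le hs with hseq | hspos
    · -- s = 0, so the element is (0, ρ) with ρ a probability: contradicts KP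
      have hteq : t = 1 := by linarith
      rw [← hseq, hteq] at hp
      simp only [zero_smul, sub_self, zero_add, one_smul] at hp
      have hmem : ((0:Meas X), ρ) ∈ hatP P ∩ (({0} : Set (Meas X)) ×ˢ PosMeas X) :=
        ⟨hp, rfl, hρ.1⟩
      rw [hP.2] at hmem
      have : ρ = 0 := by simpa [Prod.ext_iff] using hmem
      have h1 : ρ (1:C(X,ℝ)) = 1 := hρ.2.1
      rw [this, measZero] at h1
      norm_num at h1
    · -- s > 0 : contradicts hni
      apply hni
      refine ⟨s • π', s • π, t • ρ, smul_mem_PosMeas hs hπ'.1, smul_mem_PosMeas hs hπ.1,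
        smul_mem_PosMeas ht hρ.1, smul_SuppIn hπ'.2.2, smul_SuppIn hπ.2.2, ?_, ?_, ?_⟩
      · rw [measSmul, measSmul, hπ'.2.1, hπ.2.1]
      · rw [measSmul, hπ.2.1, mul_one]; exact hspos
      · exact hp
  -- separation
  obtain ⟨F, u, v, hFP, huv, hFD⟩ :=
    geometric_hahn_banach_closed_compact hP.1.2 isClosed_closure hDconv hDcomp hdisj
  have hu0 : 0 < u := by
    have := hFP 0 h0
    rwa [map_zero] at this
  have hFle : ∀ p ∈ hatP P, F p ≤ 0 := by
    intro p hp
    by_contra hpos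
    push_neg at hpos
    have hc : 0 ≤ (u + 1) / F p := div_nonneg (by linarith) hpos.le
    have h2 := hFP _ (smul_mem_hatP hc hp)
    rw [map_smul, smul_eq_mul, div_mul_cancel₀ _ (ne_of_gt hpos)] at h2
    linarith
  -- decompose F
  obtain ⟨η₀, hη₀⟩ := exists_rep (F.comp (ContinuousLinearMap.inl ℝ (Meas X) (Meas X)))
  obtain ⟨β, hβrep⟩ := exists_rep (F.comp (ContinuousLinearMap.inr ℝ (Meas X) (Meas X)))
  have hFdec : ∀ p : VSp X, F p = p.1 η₀ + p.2 β := by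
    intro p
    have hsplit : ((p.1, (0:Meas X)) : VSp X) + ((0:Meas X), p.2) = p := by
      ext <;> simp
    calc F p = F ((p.1, (0:Meas X)) + ((0:Meas X), p.2)) := by rw [hsplit]
    _ = F (p.1, (0:Meas X)) + F ((0:Meas X), p.2) := map_add F _ _
    _ = p.1 η₀ + p.2 β := by
        rw [← hη₀ p.1, ← hβrep p.2]
        rfl
  -- positivity of β
  have hβpos : ∀ x : X, 0 < β x := by
    intro x
    have hx : ((0:Meas X), dirac x) ∈ D :=
      subset_convexJoin_right hB2ne ⟨dirac x, dirac_mem_probIn (mem_univ x), rfl⟩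
    have h2 := hFD _ hx
    rw [hFdec] at h2
    have hz : (0:Meas X) η₀ = 0 := rfl
    have hd : (dirac x) β = β x := rfl
    rw [hz, hd, zero_add] at h2
    linarith
  -- β a > β b
  have hab : β b < β a := by
    have hx : ((0:Meas X), dirac a - dirac b) ∈ D :=
      subset_convexJoin_left hP0ne
        ⟨(dirac a, dirac b), ⟨dirac_mem_probIn haa, dirac_mem_probIn hbb⟩, rfl⟩
    have h2 := hFD _ hx
    rw [hFdec] at h2
    have hz : (0:Meas X) η₀ = 0 := rfl
    rw [hz, zero_add, measSub] at h2
    have hda : (dirac a) β = β a := rfl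
    have hdb : (dirac b) β = β b := rfl
    rw [hda, hdb] at h2
    linarith
  -- the temperature scale
  set T : C(X,ℝ) := ⟨fun x => (β x)⁻¹,
    Continuous.inv₀ β.continuous (fun x => ne_of_gt (hβpos x))⟩ with hT
  have hTpos : ∀ x, 0 < T x := fun x => inv_pos.mpr (hβpos x)
  have hpair : IsCDPair P (-η₀) T := by
    refine ⟨hTpos, fun β' hβ' p hp => ?_⟩
    have hββ' : β' = β := by
      ext x
      rw [hβ' x]
      show (T x)⁻¹ = β x
      rw [show T x = (β x)⁻¹ from rfl, inv_inv]
    rw [hββ']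
    have h2 := hFle p (subset_hatP P hp)
    rw [hFdec] at h2
    have h3 : p.1 (-η₀) = -(p.1 η₀) := map_neg p.1 η₀
    linarith
  refine ⟨T, ⟨-η₀, hpair⟩, ?_⟩
  show (β a)⁻¹ < (β b)⁻¹
  exact (inv_lt_inv₀ (hβpos a) (hβpos b)).mpr hab

example : True := trivial

end Aux

/-- **Theorem.** Let `(X, P)` be a Kelvin–Planck theory and let `h' = [a]`, `h = [b]`
be distinct hotness levels.  The following are equivalent:
(i) `h'` is weakly hotter than `h`, i.e. `\hat P` contains `(0, μ' − μ + ν)` with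
`μ', μ, ν` nonnegative, `supp μ' ⊆ h'`, `supp μ ⊆ h`, `μ'(h') = μ(h) > 0`;
(ii) `T σ' ≥ T σ` for every Clausius–Duhem temperature scale `T` and all
`σ' ∈ h'`, `σ ∈ h`. -/
theorem weakly_hotter_iff_temperature_ge
    {X : Type*} [TopologicalSpace X] [CompactSpace X] [T2Space X]
    (P : Set (VSp X)) (hP : IsKelvinPlanck P) (a b : X)
    (hne : hotnessLevel P a ≠ hotnessLevel P b) :
    (∃ μ' μ ν : Meas X, μ' ∈ PosMeas X ∧ μ ∈ PosMeas X ∧ ν ∈ PosMeas X ∧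
        SuppIn μ' (hotnessLevel P a) ∧ SuppIn μ (hotnessLevel P b) ∧
        μ' (1 : C(X, ℝ)) = μ (1 : C(X, ℝ)) ∧ 0 < μ (1 : C(X, ℝ)) ∧
        ((0 : Meas X), μ' - μ + ν) ∈ hatP P) ↔
      ∀ T : C(X, ℝ), IsCDTemp P T →
        ∀ a' ∈ hotnessLevel P a, ∀ b' ∈ hotnessLevel P b, T b' ≤ T a' := by
  constructor
  · exact fun h => forward_dir P a b h
  · intro hii
    by_contra hni
    have hex : (hatP P).Nonempty := by
      by_contra hempty
      rw [Set.not_nonempty_iff_eq_empty] at hempty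
      apply hne
      have hlev : ∀ c : X, hotnessLevel P c = (∅ : Set X) := by
        intro c
        ext x
        simp only [hotnessLevel, mem_setOf_eq, mem_empty_iff_false, iff_false]
        rintro ⟨h1, _⟩
        rw [hempty] at h1
        exact h1
      rw [hlev a, hlev b]
    have h0 : (0 : VSp X) ∈ hatP P := zero_mem_hatP hex
    obtain ⟨T, hT, hTab⟩ := reverse_dir P hP a b h0 hni
    have haa : a ∈ hotnessLevel P a := by
      constructor <;> · show _ ∈ hatP P; rw [sub_self]; exact h0
    have hbb : b ∈ hotnessLevel P b := by
      constructor <;> · show _ ∈ hatP P; rw [sub_self]; exact h0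
    have := hii T hT a haa b hbb
    linarith
end
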